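/- For the Einstein 3-form G_a := (1/2) ε_{abcd} e^b ∧ F^{cd} built from a coframe (e^a) and a 2-form curvature F^{cd} = (1/2) F^{cd}{}_{b'c'} e^{b'} ∧ e^{c'} with F^{cd} = −F^{dc}, one has G_a = −(Ric^b{}_a − (1/2) S δ^b_a) e^{(3)}_b, where Ric_{ab} := h_{ab'} F^{a'b'}{}_{a'b}, S := h^{ab} Ric_{ab}, and e^{(3)}_b is the contraction of the coframe volume 4-form e^{(4)} = e^0∧e^1∧e^2∧e^3 with the b-th frame vector. In particular G_a = −G^b{}_a e^{(3)}_b where G^b{}_a is the Einstein tensor. -/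

import Mathlib

open scoped BigOperators

/-- The Minkowski metric diag(-1,1,1,1). -/
noncomputable def hM : Matrix (Fin 4) (Fin 4) ℝ := Matrix.diagonal ![-1, 1, 1, 1]

/-- The Levi-Civita symbol `ε_{abcd}` with `ε_{0123} = 1`. -/
noncomputable def eps (a b c d : Fin 4) : ℝ :=
  Matrix.det (Matrix.of fun i j => if ![a, b, c, d] i = j then (1 : ℝ) else 0)

/-- The coframe 1-forms `e^a` as generators of the exterior algebra of `ℝ⁴`. -/
noncomputable def ef (a : Fin 4) : ExteriorAlgebra ℝ (Fin 4 → ℝ) :=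
  ExteriorAlgebra.ι ℝ (Pi.single a (1 : ℝ))

/-- Interior product with the frame vector dual to `e^a`. -/
noncomputable def contr (a : Fin 4) :
    ExteriorAlgebra ℝ (Fin 4 → ℝ) →ₗ[ℝ] ExteriorAlgebra ℝ (Fin 4 → ℝ) :=
  CliffordAlgebra.contractLeft (LinearMap.proj a)

/-- Volume form `e⁽⁴⁾` and its contraction `e⁽³⁾_a`. -/
noncomputable def e4 : ExteriorAlgebra ℝ (Fin 4 → ℝ) := ef 0 * ef 1 * ef 2 * ef 3

noncomputable def e3 (a : Fin 4) : ExteriorAlgebra ℝ (Fin 4 → ℝ) := contr a e4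

/-- The curvature 2-form `F^{cd} := (1/2) F^{cd}{}_{b'c'} e^{b'} ∧ e^{c'}`. -/
noncomputable def Fform (F : Fin 4 → Fin 4 → Fin 4 → Fin 4 → ℝ) (c d : Fin 4) :
    ExteriorAlgebra ℝ (Fin 4 → ℝ) :=
  (1 / 2 : ℝ) • ∑ b', ∑ c', F c d b' c' • (ef b' * ef c')

/-- The Einstein 3-form `G_a := (1/2) ε_{abcd} e^b ∧ F^{cd}`. -/
noncomputable def Gform (F : Fin 4 → Fin 4 → Fin 4 → Fin 4 → ℝ) (a : Fin 4) :
    ExteriorAlgebra ℝ (Fin 4 → ℝ) :=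
  (1 / 2 : ℝ) • ∑ b, ∑ c, ∑ d, eps a b c d • (ef b * Fform F c d)

/-- The Ricci tensor `Ric_{ab} := h_{ab'} F^{a'b'}{}_{a'b}`. -/
noncomputable def Ric (F : Fin 4 → Fin 4 → Fin 4 → Fin 4 → ℝ) (a b : Fin 4) : ℝ :=
  ∑ b', ∑ a', hM a b' * F a' b' a' b

/-- The scalar curvature `S := h^{ab} Ric_{ab}`. -/
noncomputable def Scal (F : Fin 4 → Fin 4 → Fin 4 → Fin 4 → ℝ) : ℝ :=
  ∑ a, ∑ b, hM⁻¹ a b * Ric F a b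

/-- The Einstein tensor `G^b{}_a := Ric^b{}_a − (1/2) S δ^b_a`. -/
noncomputable def Gten (F : Fin 4 → Fin 4 → Fin 4 → Fin 4 → ℝ) (b a : Fin 4) : ℝ :=
  (∑ b', hM⁻¹ b b' * Ric F b' a) - (1 / 2 : ℝ) * Scal F * (if b = a then 1 else 0)

section Aux

lemma aux_succ_two : (2 : Fin 3).succ = 3 := rfl
lemma aux_v0 : ((0 : Fin 4) : ℕ) = 0 := rfl
lemma aux_v1 : ((1 : Fin 4) : ℕ) = 1 := rfl
lemma aux_v2 : ((2 : Fin 4) : ℕ) = 2 := rfl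
lemma aux_v3 : ((3 : Fin 4) : ℕ) = 3 := rfl

lemma ef_sq (i : Fin 4) : ef i * ef i = 0 := ExteriorAlgebra.ι_sq_zero _

lemma ef_swap (i j : Fin 4) : ef j * ef i = -(ef i * ef j) := by
  unfold ef
  exact eq_neg_of_add_eq_zero_left
    (ExteriorAlgebra.ι_add_mul_swap (M := Fin 4 → ℝ) (Pi.single j 1) (Pi.single i 1))

lemma mul_ef_sq (x : ExteriorAlgebra ℝ (Fin 4 → ℝ)) (i : Fin 4) : x * ef i * ef i = 0 := by
  rw [mul_assoc, ef_sq, mul_zero]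

lemma mul_ef_swap (x : ExteriorAlgebra ℝ (Fin 4 → ℝ)) (i j : Fin 4) :
    x * ef j * ef i = -(x * ef i * ef j) := by
  rw [mul_assoc, ef_swap, mul_neg, mul_assoc]

-- oriented swap lemmas
lemma sw10 : ef 1 * ef 0 = -(ef 0 * ef 1) := ef_swap 0 1
lemma sw20 : ef 2 * ef 0 = -(ef 0 * ef 2) := ef_swap 0 2
lemma sw30 : ef 3 * ef 0 = -(ef 0 * ef 3) := ef_swap 0 3
lemma sw21 : ef 2 * ef 1 = -(ef 1 * ef 2) := ef_swap 1 2
lemma sw31 : ef 3 * ef 1 = -(ef 1 * ef 3) := ef_swap 1 3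
lemma sw32 : ef 3 * ef 2 = -(ef 2 * ef 3) := ef_swap 2 3
lemma msw10 (x : ExteriorAlgebra ℝ (Fin 4 → ℝ)) : x * ef 1 * ef 0 = -(x * ef 0 * ef 1) := mul_ef_swap x 0 1
lemma msw20 (x : ExteriorAlgebra ℝ (Fin 4 → ℝ)) : x * ef 2 * ef 0 = -(x * ef 0 * ef 2) := mul_ef_swap x 0 2
lemma msw30 (x : ExteriorAlgebra ℝ (Fin 4 → ℝ)) : x * ef 3 * ef 0 = -(x * ef 0 * ef 3) := mul_ef_swap x 0 3
lemma msw21 (x : ExteriorAlgebra ℝ (Fin 4 → ℝ)) : x * ef 2 * ef 1 = -(x * ef 1 * ef 2) := mul_ef_swap x 1 2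
lemma msw31 (x : ExteriorAlgebra ℝ (Fin 4 → ℝ)) : x * ef 3 * ef 1 = -(x * ef 1 * ef 3) := mul_ef_swap x 1 3
lemma msw32 (x : ExteriorAlgebra ℝ (Fin 4 → ℝ)) : x * ef 3 * ef 2 = -(x * ef 2 * ef 3) := mul_ef_swap x 2 3

lemma contr_ef_mul (a i : Fin 4) (x : ExteriorAlgebra ℝ (Fin 4 → ℝ)) :
    contr a (ef i * x) = (if a = i then (1:ℝ) else 0) • x - ef i * contr a x := by
  unfold contr ef ExteriorAlgebra.ι
  rw [CliffordAlgebra.contractLeft_ι_mul]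
  simp [Pi.single_apply]

lemma contr_ef (a i : Fin 4) :
    contr a (ef i) = algebraMap ℝ _ (if a = i then (1:ℝ) else 0) := by
  unfold contr ef ExteriorAlgebra.ι
  rw [CliffordAlgebra.contractLeft_ι]
  simp [Pi.single_apply]

lemma e3_0 : e3 0 = ef 1 * ef 2 * ef 3 := by
  unfold e3 e4
  rw [mul_assoc, mul_assoc, contr_ef_mul, contr_ef_mul, contr_ef_mul, contr_ef]
  simp [mul_assoc, Fin.isValue]
lemma e3_1 : e3 1 = -(ef 0 * ef 2 * ef 3) := by
  unfold e3 e4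
  rw [mul_assoc, mul_assoc, contr_ef_mul, contr_ef_mul, contr_ef_mul, contr_ef]
  simp [mul_assoc, Fin.isValue]
lemma e3_2 : e3 2 = ef 0 * ef 1 * ef 3 := by
  unfold e3 e4
  rw [mul_assoc, mul_assoc, contr_ef_mul, contr_ef_mul, contr_ef_mul, contr_ef]
  simp [mul_assoc, mul_sub, Fin.isValue]
lemma e3_3 : e3 3 = -(ef 0 * ef 1 * ef 2) := by
  unfold e3 e4
  rw [mul_assoc, mul_assoc, contr_ef_mul, contr_ef_mul, contr_ef_mul, contr_ef]
  simp [mul_assoc, mul_sub, Fin.isValue]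

lemma hM_inv : hM⁻¹ = hM := by
  apply Matrix.inv_eq_left_inv
  ext i j
  fin_cases i <;> fin_cases j <;>
    simp [hM, Matrix.mul_apply, Fin.sum_univ_four, Matrix.diagonal, Matrix.one_apply]

lemma hM00 : hM 0 0 = -1 := rfl
lemma hM11 : hM 1 1 = 1 := rfl
lemma hM22 : hM 2 2 = 1 := rfl
lemma hM33 : hM 3 3 = 1 := rfl
lemma hM01 : hM 0 1 = 0 := rfl
lemma hM02 : hM 0 2 = 0 := rfl
lemma hM03 : hM 0 3 = 0 := rfl
lemma hM10 : hM 1 0 = 0 := rfl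
lemma hM12 : hM 1 2 = 0 := rfl
lemma hM13 : hM 1 3 = 0 := rfl
lemma hM20 : hM 2 0 = 0 := rfl
lemma hM21 : hM 2 1 = 0 := rfl
lemma hM23 : hM 2 3 = 0 := rfl
lemma hM30 : hM 3 0 = 0 := rfl
lemma hM31 : hM 3 1 = 0 := rfl
lemma hM32 : hM 3 2 = 0 := rfl

lemma aux_sa_4_0_0 : Fin.succAbove (0:Fin 4) (0:Fin 3) = 1 := by decide
lemma aux_sa_4_0_1 : Fin.succAbove (0:Fin 4) (1:Fin 3) = 2 := by decide
lemma aux_sa_4_0_2 : Fin.succAbove (0:Fin 4) (2:Fin 3) = 3 := by decide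
lemma aux_sa_4_1_0 : Fin.succAbove (1:Fin 4) (0:Fin 3) = 0 := by decide
lemma aux_sa_4_1_1 : Fin.succAbove (1:Fin 4) (1:Fin 3) = 2 := by decide
lemma aux_sa_4_1_2 : Fin.succAbove (1:Fin 4) (2:Fin 3) = 3 := by decide
lemma aux_sa_4_2_0 : Fin.succAbove (2:Fin 4) (0:Fin 3) = 0 := by decide
lemma aux_sa_4_2_1 : Fin.succAbove (2:Fin 4) (1:Fin 3) = 1 := by decide
lemma aux_sa_4_2_2 : Fin.succAbove (2:Fin 4) (2:Fin 3) = 3 := by decide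
lemma aux_sa_4_3_0 : Fin.succAbove (3:Fin 4) (0:Fin 3) = 0 := by decide
lemma aux_sa_4_3_1 : Fin.succAbove (3:Fin 4) (1:Fin 3) = 1 := by decide
lemma aux_sa_4_3_2 : Fin.succAbove (3:Fin 4) (2:Fin 3) = 2 := by decide
lemma aux_sa_3_0_0 : Fin.succAbove (0:Fin 3) (0:Fin 2) = 1 := by decide
lemma aux_sa_3_0_1 : Fin.succAbove (0:Fin 3) (1:Fin 2) = 2 := by decide
lemma aux_sa_3_1_0 : Fin.succAbove (1:Fin 3) (0:Fin 2) = 0 := by decide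
lemma aux_sa_3_1_1 : Fin.succAbove (1:Fin 3) (1:Fin 2) = 2 := by decide
lemma aux_sa_3_2_0 : Fin.succAbove (2:Fin 3) (0:Fin 2) = 0 := by decide
lemma aux_sa_3_2_1 : Fin.succAbove (2:Fin 3) (1:Fin 2) = 1 := by decide
lemma aux_sa_2_0_0 : Fin.succAbove (0:Fin 2) (0:Fin 1) = 1 := by decide
lemma aux_sa_2_1_0 : Fin.succAbove (1:Fin 2) (0:Fin 1) = 0 := by decide

lemma eps_rep_01 (a c d : Fin 4) : eps a a c d = 0 := by
  apply Matrix.det_zero_of_row_eq (i_ne_j := show (0:Fin 4) ≠ 1 by decide)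
  ext k; simp
  congr

lemma eps_rep_02 (a b d : Fin 4) : eps a b a d = 0 := by
  apply Matrix.det_zero_of_row_eq (i_ne_j := show (0:Fin 4) ≠ 2 by decide)
  ext k; simp
  congr

lemma eps_rep_03 (a b c : Fin 4) : eps a b c a = 0 := by
  apply Matrix.det_zero_of_row_eq (i_ne_j := show (0:Fin 4) ≠ 3 by decide)
  ext k; simp
  congr

lemma eps_rep_12 (a b d : Fin 4) : eps a b b d = 0 := by
  apply Matrix.det_zero_of_row_eq (i_ne_j := show (1:Fin 4) ≠ 2 by decide)
  ext k; simp
  congr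

lemma eps_rep_13 (a b c : Fin 4) : eps a b c b = 0 := by
  apply Matrix.det_zero_of_row_eq (i_ne_j := show (1:Fin 4) ≠ 3 by decide)
  ext k; simp
  congr

lemma eps_rep_23 (a b c : Fin 4) : eps a b c c = 0 := by
  apply Matrix.det_zero_of_row_eq (i_ne_j := show (2:Fin 4) ≠ 3 by decide)
  ext k; simp
  congr

lemma eps_0123 : eps 0 1 2 3 = 1 := by
  simp [eps, Matrix.det_succ_row_zero, Fin.sum_univ_succ, Fin.succAbove]

lemma eps_0132 : eps 0 1 3 2 = -1 := by
  simp [eps, Matrix.det_succ_row_zero, Fin.sum_univ_succ, Fin.succAbove]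

lemma eps_0213 : eps 0 2 1 3 = -1 := by
  simp [eps, Matrix.det_succ_row_zero, Fin.sum_univ_succ, Fin.succAbove]

lemma eps_0231 : eps 0 2 3 1 = 1 := by
  simp [eps, Matrix.det_succ_row_zero, Fin.sum_univ_succ, Fin.succAbove]

lemma eps_0312 : eps 0 3 1 2 = 1 := by
  simp [eps, Matrix.det_succ_row_zero, Fin.sum_univ_succ, Fin.succAbove]

lemma eps_0321 : eps 0 3 2 1 = -1 := by
  simp [eps, Matrix.det_succ_row_zero, Fin.sum_univ_succ, Fin.succAbove]

lemma eps_1023 : eps 1 0 2 3 = -1 := by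
  simp [eps, Matrix.det_succ_row_zero, Fin.sum_univ_succ, Fin.succAbove]

lemma eps_1032 : eps 1 0 3 2 = 1 := by
  simp [eps, Matrix.det_succ_row_zero, Fin.sum_univ_succ, Fin.succAbove]

lemma eps_1203 : eps 1 2 0 3 = 1 := by
  simp [eps, Matrix.det_succ_row_zero, Fin.sum_univ_succ, Fin.succAbove]

lemma eps_1230 : eps 1 2 3 0 = -1 := by
  simp [eps, Matrix.det_succ_row_zero, Fin.sum_univ_succ, Fin.succAbove]

lemma eps_1302 : eps 1 3 0 2 = -1 := by
  simp [eps, Matrix.det_succ_row_zero, Fin.sum_univ_succ, Fin.succAbove]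

lemma eps_1320 : eps 1 3 2 0 = 1 := by
  simp [eps, Matrix.det_succ_row_zero, Fin.sum_univ_succ, Fin.succAbove]

lemma eps_2013 : eps 2 0 1 3 = 1 := by
  simp [eps, Matrix.det_succ_row_zero, Fin.sum_univ_succ, Fin.succAbove]

lemma eps_2031 : eps 2 0 3 1 = -1 := by
  simp [eps, Matrix.det_succ_row_zero, Fin.sum_univ_succ, Fin.succAbove]

lemma eps_2103 : eps 2 1 0 3 = -1 := by
  simp [eps, Matrix.det_succ_row_zero, Fin.sum_univ_succ, Fin.succAbove]

lemma eps_2130 : eps 2 1 3 0 = 1 := by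
  simp [eps, Matrix.det_succ_row_zero, Fin.sum_univ_succ, Fin.succAbove]

lemma eps_2301 : eps 2 3 0 1 = 1 := by
  simp [eps, Matrix.det_succ_row_zero, Fin.sum_univ_succ, Fin.succAbove]

lemma eps_2310 : eps 2 3 1 0 = -1 := by
  simp [eps, Matrix.det_succ_row_zero, Fin.sum_univ_succ, Fin.succAbove]

lemma eps_3012 : eps 3 0 1 2 = -1 := by
  simp [eps, Matrix.det_succ_row_zero, Fin.sum_univ_succ, Fin.succAbove]
  norm_num

lemma eps_3021 : eps 3 0 2 1 = 1 := by
  simp [eps, Matrix.det_succ_row_zero, Fin.sum_univ_succ, Fin.succAbove]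
  norm_num

lemma eps_3102 : eps 3 1 0 2 = 1 := by
  simp [eps, Matrix.det_succ_row_zero, Fin.sum_univ_succ, Fin.succAbove]
  norm_num

lemma eps_3120 : eps 3 1 2 0 = -1 := by
  simp [eps, Matrix.det_succ_row_zero, Fin.sum_univ_succ, Fin.succAbove]
  norm_num

lemma eps_3201 : eps 3 2 0 1 = -1 := by
  simp [eps, Matrix.det_succ_row_zero, Fin.sum_univ_succ, Fin.succAbove]
  norm_num

lemma eps_3210 : eps 3 2 1 0 = 1 := by
  simp [eps, Matrix.det_succ_row_zero, Fin.sum_univ_succ, Fin.succAbove]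
  norm_num

end Aux

set_option maxHeartbeats 4000000 in
/-- `G_a = −(Ric^b{}_a − (1/2) S δ^b_a) e⁽³⁾_b = −G^b{}_a e⁽³⁾_b`. -/
theorem einstein_three_form_eq (F : Fin 4 → Fin 4 → Fin 4 → Fin 4 → ℝ)
    (hF1 : ∀ c d b' c', F c d b' c' = - F d c b' c')
    (hF2 : ∀ c d b' c', F c d b' c' = - F c d c' b') (a : Fin 4) :
    Gform F a = - ∑ b, Gten F b a • e3 b := by
  have k10 : ∀ b' c', F 1 0 b' c' = -F 0 1 b' c' := fun b' c' => hF1 1 0 b' c'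
  have k20 : ∀ b' c', F 2 0 b' c' = -F 0 2 b' c' := fun b' c' => hF1 2 0 b' c'
  have k30 : ∀ b' c', F 3 0 b' c' = -F 0 3 b' c' := fun b' c' => hF1 3 0 b' c'
  have k21 : ∀ b' c', F 2 1 b' c' = -F 1 2 b' c' := fun b' c' => hF1 2 1 b' c'
  have k31 : ∀ b' c', F 3 1 b' c' = -F 1 3 b' c' := fun b' c' => hF1 3 1 b' c'
  have k32 : ∀ b' c', F 3 2 b' c' = -F 2 3 b' c' := fun b' c' => hF1 3 2 b' c'
  have kd : ∀ c b' c', F c c b' c' = 0 := fun c b' c' => by linarith [hF1 c c b' c']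
  have l10 : ∀ c d, F c d 1 0 = -F c d 0 1 := fun c d => hF2 c d 1 0
  have l20 : ∀ c d, F c d 2 0 = -F c d 0 2 := fun c d => hF2 c d 2 0
  have l30 : ∀ c d, F c d 3 0 = -F c d 0 3 := fun c d => hF2 c d 3 0
  have l21 : ∀ c d, F c d 2 1 = -F c d 1 2 := fun c d => hF2 c d 2 1
  have l31 : ∀ c d, F c d 3 1 = -F c d 1 3 := fun c d => hF2 c d 3 1
  have l32 : ∀ c d, F c d 3 2 = -F c d 2 3 := fun c d => hF2 c d 3 2
  have ld : ∀ c d b', F c d b' b' = 0 := fun c d b' => by linarith [hF2 c d b' b']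
  have key : ∀ x : Fin 4, x = 0 ∨ x = 1 ∨ x = 2 ∨ x = 3 := by decide
  rcases key a with rfl | rfl | rfl | rfl <;>
  · simp only [Gform, Fin.sum_univ_four]
    simp only [eps_rep_01, eps_rep_02, eps_rep_03, eps_rep_12, eps_rep_13, eps_rep_23,
      eps_0123, eps_0132, eps_0213, eps_0231, eps_0312, eps_0321, eps_1023, eps_1032, eps_1203, eps_1230, eps_1302, eps_1320, eps_2013, eps_2031, eps_2103, eps_2130, eps_2301, eps_2310, eps_3012, eps_3021, eps_3102, eps_3120, eps_3201, eps_3210, zero_smul, add_zero, zero_add, one_smul, neg_smul]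
    simp only [Fform, Fin.sum_univ_four, kd, ld, k10, k20, k30, k21, k31, k32,
      l10, l20, l30, l21, l31, l32, zero_smul, smul_zero, add_zero, zero_add,
      neg_zero, one_smul, neg_smul, neg_neg]
    simp only [Gten, Scal, Ric, hM_inv, Fin.sum_univ_four,
      hM00, hM01, hM02, hM03, hM10, hM11, hM12, hM13, hM20, hM21, hM22, hM23,
      hM30, hM31, hM32, hM33, e3_0, e3_1, e3_2, e3_3, Fin.reduceEq, reduceIte,
      kd, ld, k10, k20, k30, k21, k31, k32, l10, l20, l30, l21, l31, l32]
    simp only [smul_add, smul_sub, smul_smul, mul_smul_comm, smul_mul_assoc, mul_add, add_mul,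
      mul_neg, neg_mul, smul_neg, neg_neg, ← mul_assoc,
      ef_sq, mul_ef_sq, sw10, sw20, sw30, sw21, sw31, sw32,
      msw10, msw20, msw30, msw21, msw31, msw32,
      mul_zero, zero_mul, smul_zero, zero_smul, add_zero, zero_add, neg_zero]
    match_scalars <;> ring
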